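/- Let g, h : 2^E → ℝ≥0 be monotone with curvature at most c ∈ (0,1] and generic submodularity ratio at least γ ∈ (0,1]. Then there exist two orderings π^1 and π^2 of E such that for every k ∈ {1, …, n} and every S ⊆ E with |S| = k, f(P_k(π^1)) + f(P_k(π^2)) ≥ ((e^{cγ} − 1)/(c·e^{cγ}))·f(S), where P_k(π) denotes the set of the first k elements of π. -/

import Mathlib

namespace IncDec

open Finset

variable {α : Type*} [Fintype α] [DecidableEq α]

/-- Marginal gain `F(x | S) = F(S ∪ {x}) - F(S)`. -/
def marg (F : Finset α → ℝ) (x : α) (S : Finset α) : ℝ := F (insert x S) - F S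

/-- Marginal gain of a set: `F(T | S) = F(T ∪ S) - F(S)`. -/
def margSet (F : Finset α → ℝ) (T S : Finset α) : ℝ := F (T ∪ S) - F S

/-- Monotone set function. -/
def Mono (F : Finset α → ℝ) : Prop := ∀ ⦃S T : Finset α⦄, S ⊆ T → F S ≤ F T

/-- Nonnegative set function. -/
def Nonneg (F : Finset α → ℝ) : Prop := ∀ S : Finset α, 0 ≤ F S

/-- The combined objective `f(S) = h(S) + g(E \ S)`. -/
def fObj (g h : Finset α → ℝ) (S : Finset α) : ℝ := h S + g Sᶜ

/-- `F` has generic submodularity ratio at least `γ`. -/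
def GenSubRatioGE (F : Finset α → ℝ) (γ : ℝ) : Prop :=
  ∀ A B : Finset α, ∀ e : α, marg F e A ≥ γ * marg F e (A ∪ B)

/-- `F` has curvature at most `c`. -/
def CurvatureLE (F : Finset α → ℝ) (c : ℝ) : Prop :=
  ∀ A B : Finset α, ∀ e : α, e ∉ B → marg F e (A ∪ B) ≥ (1 - c) * marg F e A

/-- Submodular set function. -/
def Submodular (F : Finset α → ℝ) : Prop :=
  ∀ ⦃S T : Finset α⦄, S ⊆ T → ∀ e : α, e ∉ T → marg F e T ≤ marg F e S

/-- Modular set function. -/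
def Modular (F : Finset α → ℝ) : Prop := ∀ S : Finset α, F S = ∑ e ∈ S, F {e}

/-- Gross substitute set function. -/
def GrossSubstitute (F : Finset α → ℝ) : Prop :=
  Submodular F ∧
    ∀ A B : Finset α, Disjoint A B → 2 ≤ B.card → ∀ b ∈ B,
      ∃ b' ∈ B.erase b,
        marg F b A + margSet F (B.erase b) A ≤ marg F b' A + margSet F (B.erase b') A

/-- The set of ratios appearing in the definition of the curvature. -/
def curvRatioSet (F : Finset α → ℝ) : Set ℝ :=
  {r | ∃ A B : Finset α, ∃ e : α, e ∉ B ∧ 0 < marg F e A ∧ r = marg F e (A ∪ B) / marg F e A}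

/-- `F` has curvature exactly `c` (with `min ∅ := 1`, i.e. `c = 0` if the ratio set is empty). -/
def CurvatureEq (F : Finset α → ℝ) (c : ℝ) : Prop :=
  (¬ (curvRatioSet F).Nonempty ∧ c = 0) ∨ IsLeast (curvRatioSet F) (1 - c)

/-- The set of ratios appearing in the definition of the generic submodularity ratio. -/
def gsRatioSet (F : Finset α → ℝ) : Set ℝ :=
  {r | ∃ A B : Finset α, ∃ e : α, 0 < marg F e (A ∪ B) ∧ r = marg F e A / marg F e (A ∪ B)}

/-- `F` has generic submodularity ratio exactly `γ` (with `min ∅ := 1`). -/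
def GenSubRatioEq (F : Finset α → ℝ) (γ : ℝ) : Prop :=
  (¬ (gsRatioSet F).Nonempty ∧ γ = 1) ∨ IsLeast (gsRatioSet F) γ

/-- The singleton-based ratio set `{F(e | E \ {e}) / F({e}) : e ∈ E, F({e}) > 0}`. -/
def curvSingletonSet (F : Finset α → ℝ) : Set ℝ :=
  {r | ∃ e : α, 0 < F {e} ∧ r = marg F e ({e}ᶜ) / F {e}}

/-- A run of the double-greedy algorithm for `g` and `h`: distinct elements `elt 0, …,
`elt (n-1)` enumerating `E` (`elt i` is the element `e*_{i+1}` of the paper), together with the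
sets `H i`, `G i` (for `0 ≤ i ≤ n`), each new element maximizing the larger marginal gain and
being added to the side realizing it. -/
structure DGRun (α : Type*) [Fintype α] [DecidableEq α] (g h : Finset α → ℝ) where
  elt : ℕ → α
  H : ℕ → Finset α
  G : ℕ → Finset α
  H0 : H 0 = ∅
  G0 : G 0 = ∅
  mem : ∀ i < Fintype.card α, elt i ∉ H i ∪ G i
  distinct : ∀ i < Fintype.card α, ∀ j < Fintype.card α, elt i = elt j → i = j
  enum : ∀ x : α, ∃ i < Fintype.card α, elt i = x
  greedy : ∀ i < Fintype.card α, ∀ x : α, x ∉ H i ∪ G i →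
      max (marg g x (G i)) (marg h x (H i)) ≤ max (marg g (elt i) (G i)) (marg h (elt i) (H i))
  step : ∀ i < Fintype.card α,
      (H (i + 1) = insert (elt i) (H i) ∧ G (i + 1) = G i ∧
        marg g (elt i) (G i) ≤ marg h (elt i) (H i)) ∨
      (G (i + 1) = insert (elt i) (G i) ∧ H (i + 1) = H i ∧
        marg h (elt i) (H i) ≤ marg g (elt i) (G i))



private lemma aux_pow_sub_pow (x y : ℝ) (hx : 0 ≤ x) (hxy : x ≤ y) :
    ∀ d : ℕ, ((d : ℝ) + 1) * x ^ d * (y - x) ≤ y ^ (d + 1) - x ^ (d + 1) := by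
  intro d
  induction d with
  | zero => simp
  | succ d ih =>
    have hy : 0 ≤ y := hx.trans hxy
    have h1 : y * (((d : ℝ) + 1) * x ^ d * (y - x)) ≤ y * (y ^ (d + 1) - x ^ (d + 1)) :=
      mul_le_mul_of_nonneg_left ih hy
    have h2 : x ^ (d + 1) ≤ y * x ^ d := by
      calc x ^ (d + 1) = x * x ^ d := by ring
        _ ≤ y * x ^ d := mul_le_mul_of_nonneg_right hxy (pow_nonneg hx d)
    have hyx : 0 ≤ y - x := sub_nonneg.2 hxy
    have h3 : y ^ (d + 1 + 1) = y * y ^ (d + 1) := by ring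
    have h4 : x ^ (d + 1 + 1) = x * x ^ (d + 1) := by ring
    push_cast
    nlinarith [pow_nonneg hx d, pow_nonneg hx (d + 1), mul_le_mul_of_nonneg_right h2 hyx]

private lemma aux_one_sub_pow (x : ℝ) (hx : 0 ≤ x) (hx1 : x ≤ 1) :
    ∀ d : ℕ, 1 - x ^ (d + 1) ≤ ((d : ℝ) + 1) * (1 - x) := by
  intro d
  induction d with
  | zero => simp
  | succ d ih =>
    have h1 : 1 - x ^ (d + 1 + 1) = (1 - x) + x * (1 - x ^ (d + 1)) := by ring
    have h2 : x * (1 - x ^ (d + 1)) ≤ 1 * (((d:ℝ) + 1) * (1 - x)) := by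
      have hnn : 0 ≤ 1 - x ^ (d+1) := by
        have := pow_le_one₀ hx hx1 (n := d+1); linarith
      calc x * (1 - x ^ (d + 1)) ≤ 1 * (1 - x ^ (d+1)) := mul_le_mul_of_nonneg_right hx1 hnn
        _ ≤ 1 * (((d:ℝ) + 1) * (1 - x)) := by simpa using ih
    push_cast
    nlinarith

private lemma bernoulli_aux (a b : ℝ) (D : ℕ) (ha : a ≤ 2) (h : (D : ℝ) * a ≤ b) :
    1 - b ≤ (1 - a) ^ D := by
  have := one_add_mul_le_pow (a := -a) (by linarith) D
  have h2 : 1 + (D:ℝ) * (-a) ≤ (1 - a) ^ D := by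
    simpa [sub_eq_add_neg] using this
  linarith

private lemma key2 (c γ r : ℝ) (d : ℕ) (hc0 : 0 ≤ c) (hc1 : c ≤ 1) (hγ0 : 0 ≤ γ) (hγ1 : γ ≤ 1)
    (hr : (d : ℝ) + 2 ≤ r) :
    (1 - c * γ / (r - 1)) ^ (d + 1) * (1 - γ / r) + (1 - c) * γ / r
      ≤ (1 - c * γ / r) ^ (d + 2) := by
  have hr0 : (0:ℝ) < r := by nlinarith [Nat.cast_nonneg (α := ℝ) d]
  have hr1 : (1:ℝ) ≤ r - 1 := by nlinarith [Nat.cast_nonneg (α := ℝ) d]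
  have hr10 : (0:ℝ) < r - 1 := by linarith
  have hcγ : 0 ≤ c * γ := mul_nonneg hc0 hγ0
  have hcγ1 : c * γ ≤ 1 := by nlinarith
  set x : ℝ := 1 - c * γ / (r - 1) with hxdef
  set y : ℝ := 1 - c * γ / r with hydef
  have hx0 : 0 ≤ x := by
    have : c * γ / (r - 1) ≤ 1 := by
      rw [div_le_one hr10]; linarith
    simp only [hxdef]; linarith
  have hxy : x ≤ y := by
    have : c * γ / r ≤ c * γ / (r - 1) := by
      apply div_le_div_of_nonneg_left hcγ hr10; linarith
    simp only [hxdef, hydef]; linarith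
  have hy0 : 0 ≤ y := hx0.trans hxy
  have hy1 : y ≤ 1 := by
    have : 0 ≤ c * γ / r := by positivity
    simp only [hydef]; linarith
  have hx1 : x ≤ 1 := hxy.trans hy1
  -- Bernoulli: 1 - c*γ ≤ x^(d+1)
  have hxd : 1 - c * γ ≤ x ^ (d + 1) := by
    apply bernoulli_aux
    · have : c * γ / (r-1) ≤ 1 := by rw [div_le_one hr10]; linarith
      linarith
    · -- (d+1) * (cγ/(r-1)) ≤ cγ
      have h1 : ((d:ℝ) + 1) * (c * γ / (r - 1)) = ((d:ℝ)+1) / (r-1) * (c * γ) := by ring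
      have h2 : ((d:ℝ)+1) / (r-1) ≤ 1 := by rw [div_le_one hr10]; linarith
      have h3 : ((d:ℝ)+1) / (r-1) * (c*γ) ≤ 1 * (c*γ) := mul_le_mul_of_nonneg_right h2 hcγ
      push_cast
      rw [h1]; linarith
  have hA3 : (1 - c) * γ ≤ y * x ^ d := by
    have h1 : x ^ (d + 1) ≤ y * x ^ d := by
      calc x ^ (d+1) = x * x ^ d := by ring
        _ ≤ y * x ^ d := mul_le_mul_of_nonneg_right hxy (pow_nonneg hx0 d)
    nlinarith
  have hE : y - x = (1 - x) / r := by
    simp only [hxdef, hydef]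
    field_simp
    ring
  have hA1 := aux_pow_sub_pow x y hx0 hxy d
  have hA2 := aux_one_sub_pow x hx0 hx1 d
  have hyx : 0 ≤ y - x := sub_nonneg.2 hxy
  have identity : y ^ (d + 2) - (x ^ (d + 1) * (1 - γ / r) + (1 - c) * γ / r)
      = y * (y ^ (d + 1) - x ^ (d + 1)) - (1 - c) * (γ / r) * (1 - x ^ (d + 1)) := by
    have hy' : (1:ℝ) - γ / r = y - (1 - c) * (γ / r) := by
      simp only [hydef]; ring
    rw [hy']; ring
  -- y * (y^(d+1) - x^(d+1)) ≥ (d+1)*(y-x)*(y*x^d) ≥ (d+1)*(y-x)*((1-c)*γ)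
  have hB1 : ((d:ℝ)+1) * (y - x) * ((1-c)*γ) ≤ y * (y ^ (d+1) - x ^ (d+1)) := by
    have t1 : y * (((d:ℝ)+1) * x ^ d * (y - x)) ≤ y * (y ^ (d+1) - x ^ (d+1)) :=
      mul_le_mul_of_nonneg_left hA1 hy0
    have t2 : ((d:ℝ)+1) * (y - x) * ((1-c)*γ) ≤ ((d:ℝ)+1) * (y - x) * (y * x ^ d) := by
      apply mul_le_mul_of_nonneg_left hA3
      positivity
    calc ((d:ℝ)+1) * (y - x) * ((1-c)*γ) ≤ ((d:ℝ)+1) * (y-x) * (y * x ^ d) := t2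
      _ = y * (((d:ℝ)+1) * x ^ d * (y - x)) := by ring
      _ ≤ y * (y ^ (d+1) - x ^ (d+1)) := t1
  have hB2 : (1 - c) * (γ / r) * (1 - x ^ (d + 1)) ≤ (1-c) * (γ / r) * (((d:ℝ)+1) * (1-x)) := by
    apply mul_le_mul_of_nonneg_left hA2
    have : 0 ≤ γ / r := by positivity
    nlinarith
  have hB3 : (1-c) * (γ / r) * (((d:ℝ)+1) * (1-x)) = ((d:ℝ)+1) * (y - x) * ((1-c)*γ) := by
    rw [hE]; ring
  clear_value x y
  have hpos : 0 ≤ y * (y ^ (d + 1) - x ^ (d + 1)) - (1 - c) * (γ / r) * (1 - x ^ (d + 1)) := by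
    linarith [hB1, hB2, hB3.le, hB3.ge]
  linarith [identity, hpos]


set_option linter.unnecessarySimpa false
set_option linter.unusedVariables false
set_option linter.unusedSectionVars false

section Greedy

variable [Nonempty α] (F : Finset α → ℝ)

noncomputable def pick (A : Finset α) : α :=
  if h : Aᶜ.Nonempty then (Finset.exists_max_image Aᶜ (fun x => marg F x A) h).choose
  else Classical.arbitrary α

lemma pick_spec {A : Finset α} (h : Aᶜ.Nonempty) :
    pick F A ∈ Aᶜ ∧ ∀ y ∈ Aᶜ, marg F y A ≤ marg F (pick F A) A := by
  rw [pick, dif_pos h]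
  obtain ⟨hm, hmax⟩ := (Finset.exists_max_image Aᶜ (fun x => marg F x A) h).choose_spec
  exact ⟨hm, hmax⟩

noncomputable def gchain : ℕ → Finset α
  | 0 => ∅
  | (i + 1) => insert (pick F (gchain i)) (gchain i)

noncomputable def gelt (i : ℕ) : α := pick F (gchain F i)

lemma gchain_succ (i : ℕ) : gchain F (i + 1) = insert (gelt F i) (gchain F i) := rfl

lemma gchain_card_le : ∀ i, (gchain F i).card ≤ i := by
  intro i
  induction i with
  | zero => simp [gchain]
  | succ i ih =>
    rw [gchain_succ]
    exact le_trans (card_insert_le _ _) (by omega)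

lemma gchain_compl_nonempty {i : ℕ} (hi : i < Fintype.card α) :
    ((gchain F i)ᶜ).Nonempty := by
  rw [← Finset.card_pos, Finset.card_compl]
  have := gchain_card_le F i
  omega

lemma gelt_not_mem {i : ℕ} (hi : i < Fintype.card α) : gelt F i ∉ gchain F i := by
  have := (pick_spec F (gchain_compl_nonempty F hi)).1
  simpa [gelt] using (Finset.mem_compl.1 this)

lemma gelt_max {i : ℕ} (hi : i < Fintype.card α) {x : α} (hx : x ∉ gchain F i) :
    marg F x (gchain F i) ≤ marg F (gelt F i) (gchain F i) :=
  (pick_spec F (gchain_compl_nonempty F hi)).2 x (Finset.mem_compl.2 hx)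

lemma gchain_card : ∀ {i : ℕ}, i ≤ Fintype.card α → (gchain F i).card = i := by
  intro i
  induction i with
  | zero => simp [gchain]
  | succ i ih =>
    intro hi
    rw [gchain_succ, card_insert_of_notMem (gelt_not_mem F (by omega)), ih (by omega)]

lemma gchain_subset {i j : ℕ} (hij : i ≤ j) : gchain F i ⊆ gchain F j := by
  induction j with
  | zero => simpa [show i = 0 by omega] using Finset.Subset.refl _
  | succ j ihj =>
    rcases Nat.lt_or_ge i (j+1) with h | h
    · exact (ihj (by omega)).trans (by rw [gchain_succ]; exact subset_insert _ _)
    · have : i = j + 1 := by omega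
      subst this; exact Finset.Subset.refl _

lemma gchain_univ : gchain F (Fintype.card α) = Finset.univ :=
  Finset.eq_univ_of_card _ (gchain_card F le_rfl)

noncomputable def glist : List α := (List.range (Fintype.card α)).map (gelt F)

lemma gelt_mem_gchain {i j : ℕ} (hij : i < j) : gelt F i ∈ gchain F j := by
  exact gchain_subset F (by omega : i + 1 ≤ j) (by rw [gchain_succ]; exact mem_insert_self _ _)

lemma glist_nodup : (glist F).Nodup := by
  refine List.Nodup.map_on ?_ List.nodup_range
  intro i hi j hj hij
  rw [List.mem_range] at hi hj
  by_contra hne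
  rcases Nat.lt_or_ge i j with h | h
  · have h1 := gelt_mem_gchain F h
    rw [hij] at h1
    exact gelt_not_mem F hj h1
  · have h : j < i := by omega
    have h1 := gelt_mem_gchain F h
    rw [← hij] at h1
    exact gelt_not_mem F hi h1

lemma toFinset_range_map : ∀ k : ℕ, ((List.range k).map (gelt F)).toFinset = gchain F k := by
  intro k
  induction k with
  | zero => simp [gchain]
  | succ k ih =>
    rw [List.range_succ, List.map_append, List.toFinset_append, ih, gchain_succ]
    ext x; simp [or_comm]

lemma glist_length : (glist F).length = Fintype.card α := by simp [glist]

lemma mem_glist (x : α) : x ∈ glist F := by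
  have hx : x ∈ gchain F (Fintype.card α) := by rw [gchain_univ]; exact mem_univ x
  rw [← toFinset_range_map] at hx
  simpa [glist] using List.mem_toFinset.1 hx

lemma glist_take {k : ℕ} (hk : k ≤ Fintype.card α) :
    ((glist F).take k).toFinset = gchain F k := by
  rw [glist, ← List.map_take, List.take_range, min_eq_left hk, toFinset_range_map]

end Greedy

/-- for a nodup complete list, drop is complement of take -/
lemma drop_toFinset_compl (l : List α) (hn : l.Nodup) (hall : ∀ x : α, x ∈ l) (m : ℕ) :
    (l.drop m).toFinset = ((l.take m).toFinset)ᶜ := by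
  ext x
  rw [Finset.mem_compl, List.mem_toFinset, List.mem_toFinset]
  have hx : x ∈ l.take m ++ l.drop m := by rw [List.take_append_drop]; exact hall x
  have hnd : (l.take m ++ l.drop m).Nodup := by rw [List.take_append_drop]; exact hn
  rw [List.nodup_append] at hnd
  rw [List.mem_append] at hx
  constructor
  · intro h1 h2
    exact hnd.2.2 x h2 x h1 rfl
  · intro h1
    tauto

lemma reverse_take_toFinset (l : List α) (hn : l.Nodup) (hall : ∀ x : α, x ∈ l) {k : ℕ}
    (hk : k ≤ l.length) :
    ((l.reverse.take k).toFinset) = ((l.take (l.length - k)).toFinset)ᶜ := by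
  have h1 : l.reverse.take k = (l.drop (l.length - k)).reverse := by
    exact List.take_reverse
  rw [h1, List.toFinset_reverse, drop_toFinset_compl l hn hall]



section Analysis

variable [Nonempty α] (F : Finset α → ℝ) (S : Finset α)

lemma marg_nonneg (hm : Mono F) (x : α) (A : Finset α) : 0 ≤ marg F x A :=
  sub_nonneg.2 (hm (Finset.subset_insert x A))

/-- γ-telescoping upper bound -/
lemma L1 {γ : ℝ} (hγ0 : 0 < γ) (hratio : GenSubRatioGE F γ) (A : Finset α) :
    ∀ T : Finset α, F (T ∪ A) ≤ F A + γ⁻¹ * ∑ e ∈ T \ A, marg F e A := by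
  intro T
  induction T using Finset.induction_on with
  | empty => simp
  | @insert a T ha ih =>
    by_cases haA : a ∈ A
    · rw [Finset.insert_union, Finset.insert_eq_self.2 (Finset.mem_union_right T haA),
        Finset.insert_sdiff_of_mem T haA]
      exact ih
    · have h1 : F (insert a T ∪ A) = F (T ∪ A) + marg F a (T ∪ A) := by
        rw [Finset.insert_union, marg]; ring
      have h2 : γ * marg F a (A ∪ T) ≤ marg F a A := hratio A T a
      have h3 : marg F a (T ∪ A) ≤ γ⁻¹ * marg F a A := by
        rw [Finset.union_comm T A]
        have h2' := (le_div_iff₀' hγ0).2 h2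
        simpa [div_eq_inv_mul] using h2'
      have h4 : insert a T \ A = insert a (T \ A) := Finset.insert_sdiff_of_notMem T haA
      have h5 : a ∉ T \ A := fun hc => ha (Finset.mem_sdiff.1 hc).1
      rw [h4, Finset.sum_insert h5]
      linarith

noncomputable def del (i : ℕ) : ℝ := marg F (gelt F i) (gchain F i)

noncomputable def uu (i : ℕ) : ℝ := F (gchain F i) - F ∅

noncomputable def vv (i : ℕ) : ℝ :=
  ∑ j ∈ (Finset.range i).filter (fun j => gelt F j ∈ S), del F j

noncomputable def rr (i : ℕ) : ℕ := (S \ gchain F i).card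

lemma uu_zero : uu F 0 = 0 := by simp [uu, gchain]

lemma vv_zero : vv F S 0 = 0 := by simp [vv]

lemma rr_zero : rr F S 0 = S.card := by
  show (S \ gchain F 0).card = S.card
  simp [gchain]

lemma uu_succ (i : ℕ) : uu F (i + 1) = uu F i + del F i := by
  simp only [uu, gchain_succ, del, marg]; ring

lemma del_nonneg (hm : Mono F) (i : ℕ) : 0 ≤ del F i := marg_nonneg F hm _ _

lemma uu_mono (hm : Mono F) {i j : ℕ} (hij : i ≤ j) : uu F i ≤ uu F j :=
  sub_le_sub_right (hm (gchain_subset F hij)) _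

lemma vv_succ (i : ℕ) :
    vv F S (i + 1) = vv F S i + (if gelt F i ∈ S then del F i else 0) := by
  rw [vv, vv, Finset.range_add_one, Finset.filter_insert]
  split_ifs with h
  · rw [Finset.sum_insert (by simp)]
    ring
  · ring

lemma rr_succ_mem {i : ℕ} (hi : i < Fintype.card α) (he : gelt F i ∈ S) :
    rr F S (i + 1) + 1 = rr F S i := by
  show ((S \ gchain F (i+1)).card) + 1 = (S \ gchain F i).card
  rw [gchain_succ, Finset.sdiff_insert]
  exact Finset.card_erase_add_one
    (Finset.mem_sdiff.2 ⟨he, gelt_not_mem F hi⟩)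

lemma rr_succ_not_mem {i : ℕ} (he : gelt F i ∉ S) :
    rr F S (i + 1) = rr F S i := by
  show ((S \ gchain F (i+1)).card) = (S \ gchain F i).card
  rw [gchain_succ, Finset.sdiff_insert,
    Finset.erase_eq_of_notMem (fun hc => he (Finset.mem_sdiff.1 hc).1)]

lemma rr_ge (i : ℕ) : S.card ≤ rr F S i + i := by
  calc S.card ≤ (S \ gchain F i).card + (gchain F i).card :=
        Finset.card_le_card_sdiff_add_card
    _ ≤ rr F S i + i := by
        have := gchain_card_le F i
        simp only [rr]
        omega

/-- curvature telescoping lower bound -/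
lemma L2 {c : ℝ} (hcurv : CurvatureLE F c) :
    ∀ i : ℕ, F S + (1 - c) * (uu F i - vv F S i) ≤ F (S ∪ gchain F i) := by
  intro i
  induction i with
  | zero =>
    have : gchain F 0 = (∅ : Finset α) := rfl
    rw [this, uu_zero, vv_zero, Finset.union_empty]
    simp
  | succ i ih =>
    rw [gchain_succ, Finset.union_insert]
    by_cases he : gelt F i ∈ S
    · rw [Finset.insert_eq_self.2 (Finset.mem_union_left _ he)]
      rw [uu_succ, vv_succ, if_pos he]
      have : uu F i + del F i - (vv F S i + del F i) = uu F i - vv F S i := by ring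
      rw [this]
      exact ih
    · have h1 : F (insert (gelt F i) (S ∪ gchain F i))
          = F (S ∪ gchain F i) + marg F (gelt F i) (S ∪ gchain F i) := by
        rw [marg]; ring
      have h2 : (1 - c) * marg F (gelt F i) (gchain F i)
          ≤ marg F (gelt F i) (gchain F i ∪ S) := hcurv (gchain F i) S (gelt F i) he
      rw [Finset.union_comm (gchain F i) S] at h2
      rw [uu_succ, vv_succ, if_neg he, h1]
      have h2' : (1 - c) * del F i ≤ marg F (gelt F i) (S ∪ gchain F i) := h2
      linarith [ih, h2']

/-- the key per-step inequality -/
lemma key5 {c γ : ℝ} (hm : Mono F) (hγ0 : 0 < γ)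
    (hcurv : CurvatureLE F c) (hratio : GenSubRatioGE F γ)
    {i : ℕ} (hin : i < Fintype.card α) :
    γ * (F S - F ∅ - c * uu F i - (1 - c) * vv F S i) ≤ (rr F S i : ℝ) * del F i := by
  have hL2 := L2 F S hcurv i
  have hL1 := L1 F hγ0 hratio (gchain F i) S
  have hsum : ∑ e ∈ S \ gchain F i, marg F e (gchain F i) ≤ rr F S i • del F i := by
    apply Finset.sum_le_card_nsmul
    intro e he
    exact gelt_max F hin (Finset.mem_sdiff.1 he).2
  rw [nsmul_eq_mul] at hsum
  have huu : uu F i = F (gchain F i) - F ∅ := rfl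
  have hFS : F S - F ∅ - c * uu F i - (1 - c) * vv F S i
      ≤ γ⁻¹ * ∑ e ∈ S \ gchain F i, marg F e (gchain F i) := by
    linarith
  have h2 : γ * (F S - F ∅ - c * uu F i - (1 - c) * vv F S i)
      ≤ γ * (γ⁻¹ * ∑ e ∈ S \ gchain F i, marg F e (gchain F i)) :=
    mul_le_mul_of_nonneg_left hFS hγ0.le
  rw [← mul_assoc, mul_inv_cancel₀ hγ0.ne', one_mul] at h2
  linarith

/-- main downward induction -/
lemma main_ind {c γ : ℝ} (hm : Mono F) (hc0 : 0 < c) (hc1 : c ≤ 1) (hγ0 : 0 < γ) (hγ1 : γ ≤ 1)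
    (hcurv : CurvatureLE F c) (hratio : GenSubRatioGE F γ)
    {k : ℕ} (hkn : k ≤ Fintype.card α) (hSk : S.card = k) :
    ∀ d i, i + d = k →
      (1 - (1 - c * γ / (rr F S i : ℝ)) ^ d) * (F S - F ∅ - c * uu F i - (1 - c) * vv F S i)
        ≤ c * (uu F k - uu F i) := by
  intro d
  induction d with
  | zero =>
    intro i hi
    have : i = k := by omega
    subst this
    simp
  | succ d ih =>
    intro i hik
    have hikk : i < k := by omega
    have hin : i < Fintype.card α := lt_of_lt_of_le hikk hkn
    have hmge : d + 1 ≤ rr F S i := by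
      have := rr_ge F S i
      omega
    have hm1 : (1 : ℝ) ≤ (rr F S i : ℝ) := by exact_mod_cast Nat.one_le_iff_ne_zero.2 (by omega)
    have hcγ : 0 ≤ c * γ := mul_nonneg hc0.le hγ0.le
    have hcγ1 : c * γ ≤ 1 := by nlinarith
    have hbase0 : 0 ≤ 1 - c * γ / (rr F S i : ℝ) := by
      have : c * γ / (rr F S i : ℝ) ≤ 1 := by
        rw [div_le_one (by linarith)]; linarith
      linarith
    have hbase1 : 1 - c * γ / (rr F S i : ℝ) ≤ 1 := by
      have : 0 ≤ c * γ / (rr F S i : ℝ) := by positivity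
      linarith
    set R : ℝ := F S - F ∅ - c * uu F i - (1 - c) * vv F S i with hRdef
    by_cases hRneg : R < 0
    · have hp : 0 ≤ (1 - c * γ / (rr F S i : ℝ)) ^ (d + 1) := pow_nonneg hbase0 _
      have hp1 : (1 - c * γ / (rr F S i : ℝ)) ^ (d + 1) ≤ 1 := pow_le_one₀ hbase0 hbase1
      have h1 : (1 - (1 - c * γ / (rr F S i : ℝ)) ^ (d + 1)) * R ≤ 0 :=
        mul_nonpos_of_nonneg_of_nonpos (by linarith) hRneg.le
      have h2 : 0 ≤ c * (uu F k - uu F i) :=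
        mul_nonneg hc0.le (by linarith [uu_mono F hm hikk.le])
      linarith
    push_neg at hRneg
    have hkey := key5 F S hm hγ0 hcurv hratio hin
    rw [← hRdef] at hkey
    have hrpos : (0:ℝ) < (rr F S i : ℝ) := by linarith
    have hdel0 : γ * R / (rr F S i : ℝ) ≤ del F i := by
      rw [div_le_iff₀ hrpos]
      linarith [hkey]
    have hdel : c * γ / (rr F S i : ℝ) * R ≤ c * del F i := by
      have : c * (γ * R / (rr F S i : ℝ)) ≤ c * del F i :=
        mul_le_mul_of_nonneg_left hdel0 hc0.le
      calc c * γ / (rr F S i : ℝ) * R = c * (γ * R / (rr F S i : ℝ)) := by ring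
        _ ≤ c * del F i := this
    clear_value R
    cases d with
    | zero =>
      have hk1 : k = i + 1 := by omega
      have huk : uu F k - uu F i = del F i := by rw [hk1, uu_succ]; ring
      rw [pow_one, huk]
      have : (1 - (1 - c * γ / (rr F S i : ℝ))) * R = c * γ / (rr F S i : ℝ) * R := by ring
      rw [this]
      exact hdel
    | succ d' =>
      by_cases he : gelt F i ∈ S
      · -- element of S chosen
        have hrr := rr_succ_mem F S hin he
        have hm2 : (d' : ℝ) + 2 ≤ (rr F S i : ℝ) := by
          have : d' + 2 ≤ rr F S i := by omega
          exact_mod_cast this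
        have hcast : ((rr F S (i+1) : ℕ) : ℝ) = (rr F S i : ℝ) - 1 := by
          have : (rr F S (i+1)) + 1 = rr F S i := hrr
          push_cast [← this]
          ring
        have hIH := ih (i + 1) (by omega)
        have hR' : F S - F ∅ - c * uu F (i+1) - (1 - c) * vv F S (i+1) = R - del F i := by
          rw [uu_succ, vv_succ, if_pos he, hRdef]; ring
        rw [hR', hcast] at hIH
        have hk2 := key2 c γ ((rr F S i : ℝ)) d' hc0.le hc1 hγ0.le hγ1 hm2
        set x : ℝ := 1 - c * γ / ((rr F S i : ℝ) - 1) with hxdef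
        set y : ℝ := 1 - c * γ / (rr F S i : ℝ) with hydef
        -- Bernoulli: coefficient nonneg
        have hr1' : (1:ℝ) ≤ (rr F S i : ℝ) - 1 := by linarith
        have hxd : 1 - c * γ ≤ x ^ (d' + 1) := by
          apply bernoulli_aux
          · have : c * γ / ((rr F S i : ℝ) - 1) ≤ 1 := by
              rw [div_le_one (by linarith)]; linarith
            linarith
          · have h1 : ((d':ℝ) + 1) * (c * γ / ((rr F S i : ℝ) - 1))
                = ((d':ℝ) + 1) / ((rr F S i : ℝ) - 1) * (c * γ) := by ring
            have h2 : ((d':ℝ) + 1) / ((rr F S i : ℝ) - 1) ≤ 1 := by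
              rw [div_le_one (by linarith)]; linarith
            have h3 : ((d':ℝ) + 1) / ((rr F S i : ℝ) - 1) * (c * γ) ≤ 1 * (c * γ) :=
              mul_le_mul_of_nonneg_right h2 hcγ
            push_cast
            rw [h1]; linarith
        have hcoef : 0 ≤ x ^ (d' + 1) - 1 + c := by nlinarith
        -- chain
        have g1 : (1 - y ^ (d' + 1 + 1)) * R
            ≤ (1 - (x ^ (d' + 1) * (1 - γ / (rr F S i : ℝ))
                + (1 - c) * γ / (rr F S i : ℝ))) * R := by
          apply mul_le_mul_of_nonneg_right _ hRneg
          linarith [hk2]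
        have g2 : (1 - (x ^ (d' + 1) * (1 - γ / (rr F S i : ℝ))
              + (1 - c) * γ / (rr F S i : ℝ))) * R
            = (1 - x ^ (d' + 1)) * R + (γ / (rr F S i : ℝ) * R) * (x ^ (d' + 1) - 1 + c) := by
          ring
        have g3 : (γ / (rr F S i : ℝ) * R) * (x ^ (d' + 1) - 1 + c)
            ≤ del F i * (x ^ (d' + 1) - 1 + c) := by
          apply mul_le_mul_of_nonneg_right _ hcoef
          calc γ / (rr F S i : ℝ) * R = γ * R / (rr F S i : ℝ) := by ring
            _ ≤ del F i := hdel0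
        have g4 : (1 - x ^ (d' + 1)) * R + del F i * (x ^ (d' + 1) - 1 + c)
            = (1 - x ^ (d' + 1)) * (R - del F i) + c * del F i := by ring
        have g6 : c * (uu F k - uu F (i+1)) + c * del F i = c * (uu F k - uu F i) := by
          rw [uu_succ]; ring
        clear_value x y
        linarith [hIH, g1, g2.le, g2.ge, g3, g4.le, g4.ge, g6.le, g6.ge]
      · -- element outside S chosen
        have hrr := rr_succ_not_mem F S he
        have hIH := ih (i + 1) (by omega)
        have hR' : F S - F ∅ - c * uu F (i+1) - (1 - c) * vv F S (i+1) = R - c * del F i := by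
          rw [uu_succ, vv_succ, if_neg he, hRdef]; ring
        rw [hR', hrr] at hIH
        set y : ℝ := 1 - c * γ / (rr F S i : ℝ) with hydef
        have hyp : 0 ≤ y ^ (d' + 1) := pow_nonneg hbase0 _
        have g1 : (1 - y ^ (d' + 1 + 1)) * R
            = (1 - y ^ (d' + 1)) * R + y ^ (d' + 1) * (c * γ / (rr F S i : ℝ) * R) := by
          have : y ^ (d' + 1 + 1) = y ^ (d' + 1) * y := by ring
          rw [this, hydef]; ring
        have g2 : y ^ (d' + 1) * (c * γ / (rr F S i : ℝ) * R)
            ≤ y ^ (d' + 1) * (c * del F i) := mul_le_mul_of_nonneg_left hdel hyp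
        have g3 : (1 - y ^ (d' + 1)) * R + y ^ (d' + 1) * (c * del F i)
            = (1 - y ^ (d' + 1)) * (R - c * del F i) + c * del F i := by ring
        have g6 : c * (uu F k - uu F (i+1)) + c * del F i = c * (uu F k - uu F i) := by
          rw [uu_succ]; ring
        clear_value y
        linarith [hIH, g1.le, g1.ge, g2, g3.le, g3.ge, g6.le, g6.ge]

/-- the greedy guarantee -/
lemma greedy_bound {c γ : ℝ} (hm : Mono F) (hc0 : 0 < c) (hc1 : c ≤ 1) (hγ0 : 0 < γ)
    (hγ1 : γ ≤ 1) (hcurv : CurvatureLE F c) (hratio : GenSubRatioGE F γ)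
    {k : ℕ} (hk1 : 1 ≤ k) (hkn : k ≤ Fintype.card α) (hSk : S.card = k) :
    (Real.exp (c * γ) - 1) / (c * Real.exp (c * γ)) * (F S - F ∅)
      ≤ F (gchain F k) - F ∅ := by
  have h0 := main_ind F S hm hc0 hc1 hγ0 hγ1 hcurv hratio hkn hSk k 0 (by omega)
  rw [uu_zero, vv_zero, rr_zero, hSk] at h0
  -- h0 : (1 - (1 - cγ/k)^k) * (F S - F ∅ - 0 - 0) ≤ c * (uu F k - 0)
  have hk0 : (0:ℝ) < (k:ℝ) := by exact_mod_cast hk1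
  have hcγ : 0 ≤ c * γ := mul_nonneg hc0.le hγ0.le
  have hcγ1 : c * γ ≤ 1 := by nlinarith
  have hbase0 : 0 ≤ 1 - c * γ / (k : ℝ) := by
    have : c * γ / (k:ℝ) ≤ 1 := by
      rw [div_le_one hk0]
      have : (1:ℝ) ≤ (k:ℝ) := by exact_mod_cast hk1
      linarith
    linarith
  have hexpstep : 1 - c * γ / (k:ℝ) ≤ Real.exp (-(c * γ) / (k:ℝ)) := by
    have := Real.add_one_le_exp (-(c * γ) / (k:ℝ))
    have heq : -(c * γ) / (k:ℝ) + 1 = 1 - c * γ / (k:ℝ) := by ring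
    linarith [heq ▸ this]
  have hpow : (1 - c * γ / (k:ℝ)) ^ k ≤ Real.exp (-(c * γ)) := by
    calc (1 - c * γ / (k:ℝ)) ^ k ≤ (Real.exp (-(c * γ) / (k:ℝ))) ^ k :=
          pow_le_pow_left₀ hbase0 hexpstep k
      _ = Real.exp ((k:ℝ) * (-(c * γ) / (k:ℝ))) := (Real.exp_nat_mul _ k).symm
      _ = Real.exp (-(c * γ)) := by
          congr 1
          field_simp
  have hFS0 : 0 ≤ F S - F ∅ := sub_nonneg.2 (hm (Finset.empty_subset S))
  have hκ : (Real.exp (c * γ) - 1) / (c * Real.exp (c * γ))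
      = (1 - Real.exp (-(c * γ))) / c := by
    have hpos : 0 < Real.exp (c * γ) := Real.exp_pos _
    rw [Real.exp_neg, div_eq_div_iff (by positivity) (ne_of_gt hc0)]
    field_simp
  rw [hκ]
  have h1 : (1 - Real.exp (-(c * γ))) * (F S - F ∅)
      ≤ (1 - (1 - c * γ / (k:ℝ)) ^ k) * (F S - F ∅) :=
    mul_le_mul_of_nonneg_right (by linarith) hFS0
  have huk : uu F k = F (gchain F k) - F ∅ := rfl
  rw [div_mul_eq_mul_div, div_le_iff₀ hc0]
  nlinarith [h0, h1]

end Analysis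

/-- `phi R i` is the increment `φ_{i+1}` of the double-greedy run `R`. -/
def phi {g h : Finset α → ℝ} (R : DGRun α g h) (i : ℕ) : ℝ :=
  max (marg g (R.elt i) (R.G i)) (marg h (R.elt i) (R.H i))

theorem stmt4 (g h : Finset α → ℝ) (c γ : ℝ)
    (hgm : Mono g) (hhm : Mono h) (hg0 : Nonneg g) (hh0 : Nonneg h)
    (hc0 : 0 < c) (hc1 : c ≤ 1) (hγ0 : 0 < γ) (hγ1 : γ ≤ 1)
    (hgC : CurvatureLE g c) (hhC : CurvatureLE h c)
    (hgγ : GenSubRatioGE g γ) (hhγ : GenSubRatioGE h γ) :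
    ∃ π₁ π₂ : List α, π₁.Nodup ∧ (∀ x : α, x ∈ π₁) ∧ π₂.Nodup ∧ (∀ x : α, x ∈ π₂) ∧
      ∀ k : ℕ, 1 ≤ k → k ≤ Fintype.card α → ∀ S : Finset α, S.card = k →
        fObj g h (π₁.take k).toFinset + fObj g h (π₂.take k).toFinset ≥
          ((Real.exp (c * γ) - 1) / (c * Real.exp (c * γ))) * fObj g h S := by
  rcases isEmpty_or_nonempty α with hemp | hne
  · refine ⟨[], [], List.nodup_nil, fun x => (hemp.false x).elim, List.nodup_nil,
      fun x => (hemp.false x).elim, ?_⟩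
    intro k hk1 hkn S hS
    have hcard : Fintype.card α = 0 := Fintype.card_eq_zero
    omega
  · haveI := hne
    refine ⟨glist h, (glist g).reverse, glist_nodup h, mem_glist h,
      List.nodup_reverse.2 (glist_nodup g), ?_, ?_⟩
    · intro x
      rw [List.mem_reverse]
      exact mem_glist g x
    intro k hk1 hkn S hSk
    have hP1 : ((glist h).take k).toFinset = gchain h k := glist_take h hkn
    have hP2 : (((glist g).reverse.take k).toFinset) = (gchain g (Fintype.card α - k))ᶜ := by
      rw [reverse_take_toFinset (glist g) (glist_nodup g) (mem_glist g)
        (by rw [glist_length]; exact hkn), glist_length,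
        glist_take g (Nat.sub_le _ _)]
    have hγc : 0 ≤ c * γ := mul_nonneg hc0.le hγ0.le
    have hκγ : (Real.exp (c * γ) - 1) / (c * Real.exp (c * γ)) ≤ 1 := by
      have he := Real.add_one_le_exp (-(c * γ))
      have hexp : Real.exp (-(c*γ)) = (Real.exp (c*γ))⁻¹ := Real.exp_neg _
      have hpos : 0 < Real.exp (c * γ) := Real.exp_pos _
      rw [div_le_one (by positivity)]
      -- exp(cγ) − 1 ≤ cγ·exp(cγ) ≤ c·exp(cγ) since γ ≤ 1... use 1 − exp(−cγ) ≤ cγ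
      have h1 : 1 - (Real.exp (c*γ))⁻¹ ≤ c * γ := by
        rw [← hexp]; linarith
      have h2 : (1 - (Real.exp (c*γ))⁻¹) * Real.exp (c*γ) = Real.exp (c*γ) - 1 := by
        field_simp
      nlinarith [mul_le_mul_of_nonneg_right h1 hpos.le, h2,
        mul_nonneg (mul_nonneg hc0.le (by linarith : (0:ℝ) ≤ 1 - γ)) hpos.le]
    have hhb := greedy_bound h S hhm hc0 hc1 hγ0 hγ1 hhC hhγ hk1 hkn hSk
    have hgb : (Real.exp (c * γ) - 1) / (c * Real.exp (c * γ)) * (g Sᶜ - g ∅)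
        ≤ g (gchain g (Fintype.card α - k)) - g ∅ := by
      rcases Nat.eq_or_lt_of_le hkn with heq | hlt
      · have hSc : Sᶜ = (∅ : Finset α) := by
          rw [← Finset.card_eq_zero, Finset.card_compl, hSk, heq, Nat.sub_self]
        have hnk : Fintype.card α - k = 0 := by omega
        rw [hSc, hnk]
        have : gchain g 0 = (∅ : Finset α) := rfl
        rw [this]
        simp
      · exact greedy_bound g Sᶜ hgm hc0 hc1 hγ0 hγ1 hgC hgγ (by omega)
          (Nat.sub_le _ _) (by rw [Finset.card_compl, hSk])
    rw [ge_iff_le, fObj, fObj, fObj, hP1, hP2, compl_compl]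
    have hg1 : g ∅ ≤ g ((gchain h k)ᶜ) := hgm (Finset.empty_subset _)
    have hh1 : h ∅ ≤ h ((gchain g (Fintype.card α - k))ᶜ) := hhm (Finset.empty_subset _)
    have hg0' : 0 ≤ g ∅ := hg0 ∅
    have hh0' : 0 ≤ h ∅ := hh0 ∅
    have hκ0 : 0 ≤ (Real.exp (c * γ) - 1) / (c * Real.exp (c * γ)) := by
      have h1 : 1 ≤ Real.exp (c * γ) := by
        rw [← Real.exp_zero]
        exact Real.exp_le_exp.2 hγc
      have hpos : 0 < Real.exp (c * γ) := Real.exp_pos _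
      exact div_nonneg (by linarith) (by positivity)
    nlinarith [hhb, hgb, hκγ, hκ0, mul_le_mul_of_nonneg_left (add_nonneg hh0' hg0')
      (hκ0 : (0:ℝ) ≤ (Real.exp (c * γ) - 1) / (c * Real.exp (c * γ)))]


end IncDec
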